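/- Let N be an N-layer (open or closed) Π³-net, fix 1≤i≤N, and let p∈P_i^* (so possibly p=p_ext when the net is open and i=N; in that case b_p denotes the bag of p_ext in the underlying closed net). If a marking m satisfies m·P_{i−1} ≥ pot(p) and m∈Live_j for every 1≤j≤i−1, then there exists m'∈R_{≤i−1}(m) such that m'(q)≥b_p(q) for every q∈P_{i−1}. -/

import Mathlib

open Finset

section PetriBasics

variable {P T : Type} [Fintype P] [Fintype T]

/-- Transition `t` is enabled at marking `m`. -/
def Enabled (Wm : P → T → ℕ) (m : P → ℕ) (t : T) : Prop :=
  ∀ p, Wm p t ≤ m p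

/-- The marking obtained by firing transition `t` at marking `m`. -/
def Fire (Wm Wp : P → T → ℕ) (m : P → ℕ) (t : T) : P → ℕ :=
  fun p => m p - Wm p t + Wp p t

/-- One firing step. -/
def Step (Wm Wp : P → T → ℕ) (m m' : P → ℕ) : Prop :=
  ∃ t, Enabled Wm m t ∧ m' = Fire Wm Wp m t

/-- Reachability. -/
def Reach (Wm Wp : P → T → ℕ) : (P → ℕ) → (P → ℕ) → Prop :=
  Relation.ReflTransGen (Step Wm Wp)

/-- One firing step using a transition from the set `S`. -/
def StepIn (Wm Wp : P → T → ℕ) (S : T → Prop) (m m' : P → ℕ) : Prop :=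
  ∃ t, S t ∧ Enabled Wm m t ∧ m' = Fire Wm Wp m t

/-- Reachability using only transitions from the set `S`. -/
def ReachIn (Wm Wp : P → T → ℕ) (S : T → Prop) : (P → ℕ) → (P → ℕ) → Prop :=
  Relation.ReflTransGen (StepIn Wm Wp S)

/-- The marked net `(N, m0)` is live. -/
def LiveMarked (Wm Wp : P → T → ℕ) (m0 : P → ℕ) : Prop :=
  ∀ (t : T) (m : P → ℕ), Reach Wm Wp m0 m →
    ∃ m', Reach Wm Wp m m' ∧ Enabled Wm m' t

/-- `b` is a bag of the net. -/
def IsBag (Wm Wp : P → T → ℕ) (b : P → ℕ) : Prop :=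
  ∃ t, b = (fun p => Wm p t) ∨ b = (fun p => Wp p t)

/-- Edges of the bag graph. -/
def BagEdge (Wm Wp : P → T → ℕ) (b b' : P → ℕ) : Prop :=
  ∃ t, b = (fun p => Wm p t) ∧ b' = (fun p => Wp p t)

/-- Every connected component of the bag graph is strongly connected. -/
def WeaklyReversible (Wm Wp : P → T → ℕ) : Prop :=
  ∀ b b' : P → ℕ,
    Relation.ReflTransGen (fun x y => BagEdge Wm Wp x y ∨ BagEdge Wm Wp y x) b b' →
    Relation.ReflTransGen (BagEdge Wm Wp) b b'

/-- `w · W(t)`, where `W = W⁺ − W⁻` is the incidence matrix. -/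
def IncDot (Wm Wp : P → T → ℕ) (w : P → ℚ) (t : T) : ℚ :=
  ∑ p, w p * ((Wp p t : ℚ) - (Wm p t : ℚ))

/-- `w` is a witness of the bag `b`. -/
def IsWitness (Wm Wp : P → T → ℕ) (b : P → ℕ) (w : P → ℚ) : Prop :=
  ∀ t, (b = (fun p => Wm p t) → IncDot Wm Wp w t = -1) ∧
       (b = (fun p => Wp p t) → IncDot Wm Wp w t = 1) ∧
       (b ≠ (fun p => Wm p t) → b ≠ (fun p => Wp p t) → IncDot Wm Wp w t = 0)

/-- `N` is a Π²-net. -/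
def IsPi2 (Wm Wp : P → T → ℕ) : Prop :=
  WeaklyReversible Wm Wp ∧ ∀ b, IsBag Wm Wp b → ∃ w, IsWitness Wm Wp b w

/-- The potential of a place: `‖b_p‖ − 1`. -/
def potOf (bag : P → P → ℕ) (p : P) : ℕ := (∑ q, bag p q) - 1

/-- Minimum of `f` over `S`, with default value `d` when `S` is empty. -/
def minPotD {α : Type} (S : Finset α) (f : α → ℕ) (d : ℕ) : ℕ :=
  if h : S.Nonempty then S.inf' h f else d

end PetriBasics

/-- An `Nn`-layer closed Π³-net. -/
structure ClosedPi3 (P T : Type) [Fintype P] [Fintype T] (Nn : ℕ) where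
  Wm : P → T → ℕ
  Wp : P → T → ℕ
  no_useless : ∀ t, (fun p => Wm p t) ≠ (fun p => Wp p t)
  no_dup : ∀ t t' : T, (fun p => Wm p t) = (fun p => Wm p t') →
      (fun p => Wp p t) = (fun p => Wp p t') → t = t'
  /-- the bag associated with each place -/
  bag : P → P → ℕ
  /-- the layer of each place -/
  layer : P → ℕ
  bag_isBag : ∀ p, IsBag Wm Wp (bag p)
  bag_surj : ∀ b, IsBag Wm Wp b → ∃ p, bag p = b
  bag_inj : Function.Injective bag
  bag_self : ∀ p, bag p p = 1
  layer_pos : ∀ p, 1 ≤ layer p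
  layer_le : ∀ p, layer p ≤ Nn
  layer_surj : ∀ i, 1 ≤ i → i ≤ Nn → ∃ p, layer p = i
  edge_layer : ∀ p q : P, BagEdge Wm Wp (bag p) (bag q) → layer p = layer q
  layer_conn : ∀ p q : P, layer p = layer q →
      Relation.ReflTransGen (BagEdge Wm Wp) (bag p) (bag q)
  resource : ∀ p q : P, q ≠ p → 0 < bag p q →
      layer q + 1 = layer p ∧ ∀ r, layer r = layer q → potOf bag r ≤ potOf bag q

namespace ClosedPi3

variable {P T : Type} [Fintype P] [Fintype T] {Nn : ℕ} (C : ClosedPi3 P T Nn)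

def pot (p : P) : ℕ := potOf C.bag p

/-- `P_i`: the places of layer `i`. -/
def places (i : ℕ) : Finset P := Finset.univ.filter (fun p => C.layer p = i)

/-- `POT_i`: the maximal potential in layer `i`. -/
def POT (i : ℕ) : ℕ := (C.places i).sup C.pot

/-- `P_i^max`: the places of maximal potential in layer `i`. -/
def placesMax (i : ℕ) : Finset P := (C.places i).filter (fun p => C.pot p = C.POT i)

/-- `cin(p) = POT_i − pot(p)` for `p ∈ P_i`. -/
def cin (p : P) : ℤ := (C.POT (C.layer p) : ℤ) - (C.pot p : ℤ)

/-- The invariant vector `v^(i)` (for `i = Nn` this is `v^(N)`). -/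
def vvec (i : ℕ) : P → ℤ :=
  if i = Nn then (fun p => if C.layer p = Nn then 1 else 0)
  else fun p => (if C.layer p = i then 1 else 0) + (if C.layer p = i + 1 then C.cin p else 0)

/-- `m · v^(i)`. -/
def vdot (i : ℕ) (m : P → ℕ) : ℤ := ∑ p, C.vvec i p * (m p : ℤ)

/-- `m ∈ Inv_i(m0)`. -/
def InvSet (m0 : P → ℕ) (i : ℕ) (m : P → ℕ) : Prop := C.vdot i m = C.vdot i m0

/-- `m ∈ Live_i`. -/
def LiveSet (i : ℕ) (m : P → ℕ) : Prop :=
  if i = Nn then 0 < ∑ p ∈ C.places Nn, m p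
  else minPotD ((C.places (i + 1)).filter (fun p => 0 < m p)) C.pot (C.POT (i + 1))
        ≤ ∑ p ∈ C.places i, m p

/-- `t` belongs to `⋃ {T_i | S i}`: the input bag of `t` lies in a layer satisfying `S`. -/
def transIn (S : ℕ → Prop) (t : T) : Prop :=
  ∃ p, S (C.layer p) ∧ C.bag p = (fun q => C.Wm q t)

/-- The marking `m` is `i`-live. -/
def iLive (i : ℕ) (m : P → ℕ) : Prop :=
  ∀ t, C.transIn (· ≤ i) t →
    ∃ m', ReachIn C.Wm C.Wp (C.transIn (· ≤ i)) m m' ∧ Enabled C.Wm m' t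

end ClosedPi3

/-- An `Nn`-layer open Π³-net over places `P`: it is obtained from an `Nn`-layer
closed Π³-net over `Option P` by deleting the place `none` (a.k.a. `p_ext`),
which lies in layer `Nn`. -/
structure OpenPi3 (P T : Type) [Fintype P] [Fintype T] (Nn : ℕ) where
  closed : ClosedPi3 (Option P) T Nn
  pext_layer : closed.layer none = Nn

namespace OpenPi3

variable {P T : Type} [Fintype P] [Fintype T] {Nn : ℕ} (O : OpenPi3 P T Nn)

/-- Backward incidence matrix of the open net. -/
def Wm : P → T → ℕ := fun p t => O.closed.Wm (some p) t

/-- Forward incidence matrix of the open net. -/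
def Wp : P → T → ℕ := fun p t => O.closed.Wp (some p) t

def layer (p : P) : ℕ := O.closed.layer (some p)

def pot (p : P) : ℕ := O.closed.pot (some p)

/-- `pot(p_ext)`. -/
def potExt : ℕ := O.closed.pot none

/-- `P_i`: the (remaining) places of layer `i`. -/
def places (i : ℕ) : Finset P := Finset.univ.filter (fun p => O.layer p = i)

/-- `POT_i`, with `POT_N = pot(p_ext)` for open nets. -/
def POT (i : ℕ) : ℕ := if i = Nn then O.potExt else (O.places i).sup O.pot

def placesMax (i : ℕ) : Finset P := (O.places i).filter (fun p => O.pot p = O.POT i)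

def cin (p : P) : ℤ := (O.POT (O.layer p) : ℤ) - (O.pot p : ℤ)

/-- The invariant vector `v^(i)` (used for `1 ≤ i ≤ Nn − 1`). -/
def vvec (i : ℕ) : P → ℤ :=
  fun p => (if O.layer p = i then 1 else 0) + (if O.layer p = i + 1 then O.cin p else 0)

def vdot (i : ℕ) (m : P → ℕ) : ℤ := ∑ p, O.vvec i p * (m p : ℤ)

def InvSet (m0 : P → ℕ) (i : ℕ) (m : P → ℕ) : Prop :=
  if i = Nn then True else O.vdot i m = O.vdot i m0

/-- `m ∈ Live_i` for the open net: for `i = N − 1` the virtual place `p_ext`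
always counts as marked. -/
def LiveSet (i : ℕ) (m : P → ℕ) : Prop :=
  if i = Nn then True
  else if i + 1 = Nn then
    min O.potExt
        (minPotD ((O.places Nn).filter (fun p => 0 < m p)) O.pot O.potExt)
      ≤ ∑ p ∈ O.places i, m p
  else
    minPotD ((O.places (i + 1)).filter (fun p => 0 < m p)) O.pot (O.POT (i + 1))
      ≤ ∑ p ∈ O.places i, m p

def transIn (S : ℕ → Prop) (t : T) : Prop := O.closed.transIn S t

def iLive (i : ℕ) (m : P → ℕ) : Prop :=
  ∀ t, O.transIn (· ≤ i) t →
    ∃ m', ReachIn O.Wm O.Wp (O.transIn (· ≤ i)) m m' ∧ Enabled O.Wm m' t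

end OpenPi3
section Aux

namespace ClosedPi3

variable {P T : Type} [Fintype P] [Fintype T] {Nn : ℕ} (C : ClosedPi3 P T Nn)

lemma mem_places {k : ℕ} {q : P} : q ∈ C.places k ↔ C.layer q = k := by
  simp [places]

lemma sum_bag_all (s : P) : ∑ q, C.bag s q = C.pot s + 1 := by
  have h1 : C.bag s s ≤ ∑ q, C.bag s q :=
    Finset.single_le_sum (fun i _ => Nat.zero_le _) (Finset.mem_univ s)
  rw [C.bag_self s] at h1
  have : C.pot s = (∑ q, C.bag s q) - 1 := rfl
  omega

lemma bag_zero_of {s q : P} (hq : q ≠ s) (h : C.layer q + 1 ≠ C.layer s) : C.bag s q = 0 := by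
  by_contra h0
  exact h (C.resource s q hq (Nat.pos_of_ne_zero h0)).1

lemma sum_bag_places_self (s : P) : ∑ q ∈ C.places (C.layer s), C.bag s q = 1 := by
  rw [Finset.sum_eq_single s]
  · exact C.bag_self s
  · intro q hq hne
    exact C.bag_zero_of hne (by rw [(C.mem_places).1 hq]; omega)
  · intro h; exact absurd (C.mem_places.2 rfl) h

lemma sum_bag_places_pred {s : P} {l : ℕ} (hl : l + 1 = C.layer s) :
    ∑ q ∈ C.places l, C.bag s q = C.pot s := by
  classical
  have hs : s ∉ C.places l := by
    rw [C.mem_places]; omega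
  have hsub : C.places l ⊆ Finset.univ.erase s := by
    intro q hq
    exact Finset.mem_erase.2 ⟨fun h => hs (h ▸ hq), Finset.mem_univ q⟩
  have h0 : ∀ q ∈ Finset.univ.erase s, q ∉ C.places l → C.bag s q = 0 := by
    intro q hq hnotin
    refine C.bag_zero_of (Finset.ne_of_mem_erase hq) ?_
    have : C.layer q ≠ l := fun h => hnotin (C.mem_places.2 h)
    omega
  have he : ∑ q ∈ C.places l, C.bag s q = ∑ q ∈ Finset.univ.erase s, C.bag s q :=
    Finset.sum_subset hsub h0
  have h2 := Finset.sum_erase_add Finset.univ (C.bag s) (Finset.mem_univ s)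
  rw [C.bag_self s] at h2
  have h3 := C.sum_bag_all s
  omega

lemma sum_bag_places_zero {s : P} {l : ℕ} (h1 : l ≠ C.layer s) (h2 : l + 1 ≠ C.layer s) :
    ∑ q ∈ C.places l, C.bag s q = 0 := by
  apply Finset.sum_eq_zero
  intro q hq
  have hlq : C.layer q = l := C.mem_places.1 hq
  exact C.bag_zero_of (by rintro rfl; exact h1 hlq.symm) (by omega)

lemma pot_layer_one {s : P} (hs : C.layer s = 1) : C.pot s = 0 := by
  have h : ∑ q, C.bag s q = 1 := by
    rw [Finset.sum_eq_single s]
    · exact C.bag_self s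
    · intro q hq hne
      refine C.bag_zero_of hne ?_
      have := C.layer_pos q; omega
    · intro h; exact absurd (Finset.mem_univ s) h
  have := C.sum_bag_all s
  omega

lemma trans_data (t : T) :
    ∃ s s' : P, C.bag s = (fun q => C.Wm q t) ∧ C.bag s' = (fun q => C.Wp q t) ∧
      s ≠ s' ∧ C.layer s' = C.layer s := by
  obtain ⟨s, hs⟩ := C.bag_surj _ ⟨t, Or.inl rfl⟩
  obtain ⟨s', hs'⟩ := C.bag_surj _ ⟨t, Or.inr rfl⟩
  refine ⟨s, s', hs, hs', ?_, (C.edge_layer s s' ⟨t, hs, hs'⟩).symm⟩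
  rintro rfl
  exact C.no_useless t (hs.symm.trans hs')

end ClosedPi3

lemma fire_balance {P T : Type} {Wm Wp : P → T → ℕ} {m : P → ℕ} {t : T}
    (hen : Enabled Wm m t) (q : P) :
    Fire Wm Wp m t q + Wm q t = m q + Wp q t := by
  have := hen q
  simp only [Fire]
  omega

end Aux
section Aux2

lemma minPotD_le_of_mem {α : Type} {S : Finset α} {f : α → ℕ} {d : ℕ} {u : α}
    (hu : u ∈ S) : minPotD S f d ≤ f u := by
  rw [minPotD, dif_pos ⟨u, hu⟩]
  exact Finset.inf'_le f hu

lemma minPotD_le_of_forall {α : Type} {S : Finset α} {f : α → ℕ} {d : ℕ}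
    (h : ∀ u ∈ S, f u ≤ d) : minPotD S f d ≤ d := by
  rw [minPotD]
  split_ifs with hS
  · obtain ⟨u, hu⟩ := hS
    exact le_trans (Finset.inf'_le f hu) (h u hu)
  · exact le_rfl

lemma le_minPotD {α : Type} {S : Finset α} {f : α → ℕ} {d : ℕ} {c : ℕ}
    (h1 : ∀ u ∈ S, c ≤ f u) (h2 : c ≤ d) : c ≤ minPotD S f d := by
  rw [minPotD]
  split_ifs with hS
  · exact Finset.le_inf' hS f h1
  · exact h2

lemma minPotD_attained {α : Type} {S : Finset α} {f : α → ℕ} {d : ℕ}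
    (hS : S.Nonempty) : ∃ u ∈ S, minPotD S f d = f u := by
  rw [minPotD, dif_pos hS]
  obtain ⟨u, hu, he⟩ := Finset.exists_mem_eq_inf' hS f
  exact ⟨u, hu, he⟩

lemma minPotD_eq_of_corr {α β : Type} {S : Finset α} {S' : Finset β}
    {f : α → ℕ} {f' : β → ℕ} {d : ℕ}
    (h1 : ∀ x ∈ S, ∃ y ∈ S', f x = f' y) (h2 : ∀ y ∈ S', ∃ x ∈ S, f x = f' y) :
    minPotD S f d = minPotD S' f' d := by
  rw [minPotD, minPotD]
  split_ifs with hS hS' hS'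
  · apply le_antisymm
    · refine Finset.le_inf' hS' f' fun y hy => ?_
      obtain ⟨x, hx, he⟩ := h2 y hy
      exact he ▸ Finset.inf'_le f hx
    · refine Finset.le_inf' hS f fun x hx => ?_
      obtain ⟨y, hy, he⟩ := h1 x hx
      exact he ▸ Finset.inf'_le f' hy
  · obtain ⟨x, hx⟩ := hS
    obtain ⟨y, hy, _⟩ := h1 x hx
    exact absurd ⟨y, hy⟩ hS'
  · obtain ⟨y, hy⟩ := hS'
    obtain ⟨x, hx, _⟩ := h2 y hy
    exact absurd ⟨x, hx⟩ hS
  · rfl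

lemma sup_eq_of_corr {α β : Type} {S : Finset α} {S' : Finset β}
    {f : α → ℕ} {f' : β → ℕ}
    (h1 : ∀ x ∈ S, ∃ y ∈ S', f x = f' y) (h2 : ∀ y ∈ S', ∃ x ∈ S, f x = f' y) :
    S.sup f = S'.sup f' := by
  apply le_antisymm
  · refine Finset.sup_le fun x hx => ?_
    obtain ⟨y, hy, he⟩ := h1 x hx
    exact he ▸ Finset.le_sup hy
  · refine Finset.sup_le fun y hy => ?_
    obtain ⟨x, hx, he⟩ := h2 y hy
    exact he ▸ Finset.le_sup hx

namespace ClosedPi3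

variable {P T : Type} [Fintype P] [Fintype T] {Nn : ℕ} (C : ClosedPi3 P T Nn)

lemma pot_le_POT {u : P} : C.pot u ≤ C.POT (C.layer u) :=
  Finset.le_sup (C.mem_places.2 rfl)

lemma pot_eq_POT_of_max {u : P}
    (h : ∀ r, C.layer r = C.layer u → C.pot r ≤ C.pot u) :
    C.pot u = C.POT (C.layer u) := by
  refine le_antisymm C.pot_le_POT (Finset.sup_le fun r hr => h r (C.mem_places.1 hr))

/-- Monotonicity of `ReachIn` in the transition set. -/
lemma reachIn_mono {Wm Wp : P → T → ℕ} {S S' : T → Prop} (h : ∀ t, S t → S' t)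
    {m m' : P → ℕ} (hr : ReachIn Wm Wp S m m') : ReachIn Wm Wp S' m m' := by
  induction hr with
  | refl => exact .refl
  | tail _ hstep ih =>
    obtain ⟨t, ht, hen, he⟩ := hstep
    exact ih.tail ⟨t, h t ht, hen, he⟩

lemma reachIn_preserve {Wm Wp : P → T → ℕ} {S : T → Prop} {Q : (P → ℕ) → Prop}
    (hQ : ∀ m t, S t → Enabled Wm m t → Q m → Q (Fire Wm Wp m t))
    {m m' : P → ℕ} (hr : ReachIn Wm Wp S m m') (hm : Q m) : Q m' := by
  induction hr with
  | refl => exact hm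
  | tail _ hstep ih =>
    obtain ⟨t, ht, hen, rfl⟩ := hstep
    exact hQ _ t ht hen ih

end ClosedPi3

end Aux2
set_option linter.unusedSectionVars false

section Aux3

namespace ClosedPi3

variable {P T : Type} [Fintype P] [Fintype T] {Nn : ℕ} (C : ClosedPi3 P T Nn)

/-- Firing any enabled transition preserves the Live sets (below layer `Nn`). -/
lemma live_preserved {j : ℕ} (hj : j ≠ Nn) {m : P → ℕ} {t : T}
    (hen : Enabled C.Wm m t) (hlive : C.LiveSet j m) :
    C.LiveSet j (Fire C.Wm C.Wp m t) := by
  obtain ⟨s, s2, hbs, hbs2, hne, hls2⟩ := C.trans_data t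
  set k := C.layer s with hk
  set m' := Fire C.Wm C.Wp m t with hm'
  have hWm : ∀ q, C.Wm q t = C.bag s q := fun q => (congrFun hbs q).symm
  have hWp : ∀ q, C.Wp q t = C.bag s2 q := fun q => (congrFun hbs2 q).symm
  have bal : ∀ q, m' q + C.bag s q = m q + C.bag s2 q := by
    intro q
    have := fire_balance (Wp := C.Wp) hen q
    rw [hWm q, hWp q] at this
    exact this
  have sumbal : ∀ A : Finset P,
      (∑ q ∈ A, m' q) + (∑ q ∈ A, C.bag s q) = (∑ q ∈ A, m q) + (∑ q ∈ A, C.bag s2 q) := by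
    intro A
    rw [← Finset.sum_add_distrib, ← Finset.sum_add_distrib]
    exact Finset.sum_congr rfl fun q _ => bal q
  have fix : ∀ q, C.layer q ≠ k → C.layer q + 1 ≠ k → m' q = m q := by
    intro q h1 h2
    have z1 : C.bag s q = 0 := C.bag_zero_of (fun h => h1 (h ▸ rfl)) h2
    have z2 : C.bag s2 q = 0 := by
      refine C.bag_zero_of (fun h => h1 (h ▸ hls2)) ?_
      rw [hls2]; exact h2
    have := bal q; omega
  rw [LiveSet, if_neg hj] at hlive ⊢
  -- enabledness bound on layer below s
  have henS : ∀ A : Finset P, (∑ q ∈ A, C.bag s q) ≤ ∑ q ∈ A, m q := by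
    intro A
    refine Finset.sum_le_sum fun q _ => ?_
    rw [← hWm q]; exact hen q
  by_cases hkj : k = j
  · -- layer j fired: counts preserved, layer j+1 untouched
    have hfix1 : ∀ q ∈ C.places (j+1), m' q = m q := by
      intro q hq
      have hlq := C.mem_places.1 hq
      exact fix q (by omega) (by omega)
    have hfilter : (C.places (j+1)).filter (fun q => 0 < m' q)
        = (C.places (j+1)).filter (fun q => 0 < m q) := by
      refine Finset.filter_congr fun q hq => by rw [hfix1 q hq]
    have hsum : ∑ q ∈ C.places j, m' q = ∑ q ∈ C.places j, m q := by
      have h1 : ∑ q ∈ C.places j, C.bag s q = 1 := by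
        rw [← hkj]; exact C.sum_bag_places_self s
      have h2 : ∑ q ∈ C.places j, C.bag s2 q = 1 := by
        have : C.layer s2 = j := by rw [hls2, ← hkj]
        rw [← this]; exact C.sum_bag_places_self s2
      have := sumbal (C.places j); omega
    rw [hfilter, hsum]; exact hlive
  by_cases hkj1 : k = j + 1
  · -- layer j+1 fired
    have h1 : ∑ q ∈ C.places j, C.bag s q = C.pot s :=
      C.sum_bag_places_pred (by omega)
    have h2 : ∑ q ∈ C.places j, C.bag s2 q = C.pot s2 :=
      C.sum_bag_places_pred (by rw [hls2]; omega)
    have hsb := sumbal (C.places j)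
    rw [h1, h2] at hsb
    have hpots : C.pot s ≤ ∑ q ∈ C.places j, m q := by
      rw [← h1]; exact henS (C.places j)
    have hs2mem : s2 ∈ (C.places (j+1)).filter (fun q => 0 < m' q) := by
      have hb0 : C.bag s s2 = 0 := by
        refine C.bag_zero_of hne.symm ?_
        rw [hls2]; omega
      have hb1 : C.bag s2 s2 = 1 := C.bag_self s2
      have := bal s2
      refine Finset.mem_filter.2 ⟨C.mem_places.2 (by rw [hls2, hkj1]), by omega⟩
    have hminle : minPotD ((C.places (j+1)).filter (fun q => 0 < m' q)) C.pot (C.POT (j+1))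
        ≤ C.pot s2 := minPotD_le_of_mem hs2mem
    omega
  by_cases hkj2 : k = j + 2
  · -- layer j+2 fired: layer j untouched (sums), layer j+1 marked set changes only at max-pot
    have hsum : ∑ q ∈ C.places j, m' q = ∑ q ∈ C.places j, m q := by
      have h1 : ∑ q ∈ C.places j, C.bag s q = 0 :=
        C.sum_bag_places_zero (by omega) (by omega)
      have h2 : ∑ q ∈ C.places j, C.bag s2 q = 0 :=
        C.sum_bag_places_zero (by rw [hls2]; omega) (by rw [hls2]; omega)
      have := sumbal (C.places j); omega
    rw [hsum]
    have hmax : ∀ u, C.layer u = j + 1 → m' u ≠ m u → C.pot u = C.POT (j+1) := by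
      intro u hlu hne'
      have hbne : C.bag s u ≠ 0 ∨ C.bag s2 u ≠ 0 := by
        by_contra h; push_neg at h
        have := bal u; omega
      have hmax' : ∀ r, C.layer r = C.layer u → C.pot r ≤ C.pot u := by
        rcases hbne with h | h
        · exact (C.resource s u (fun he => by rw [he] at hlu; omega)
            (Nat.pos_of_ne_zero h)).2
        · exact (C.resource s2 u (fun he => by rw [he, hls2] at hlu; omega)
            (Nat.pos_of_ne_zero h)).2
      have := C.pot_eq_POT_of_max hmax'
      rw [hlu] at this; exact this
    have hub : minPotD ((C.places (j+1)).filter (fun q => 0 < m' q)) C.pot (C.POT (j+1))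
        ≤ C.POT (j+1) := by
      refine minPotD_le_of_forall fun u hu => ?_
      have := C.mem_places.1 (Finset.mem_filter.1 hu).1
      calc C.pot u ≤ C.POT (C.layer u) := C.pot_le_POT
        _ = C.POT (j+1) := by rw [this]
    by_cases hM : ((C.places (j+1)).filter (fun q => 0 < m q)).Nonempty
    · obtain ⟨u0, hu0, he0⟩ := minPotD_attained (f := C.pot) (d := C.POT (j+1)) hM
      rw [he0] at hlive
      by_cases h0 : 0 < m' u0
      · have : u0 ∈ (C.places (j+1)).filter (fun q => 0 < m' q) :=
          Finset.mem_filter.2 ⟨(Finset.mem_filter.1 hu0).1, h0⟩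
        exact le_trans (minPotD_le_of_mem this) hlive
      · have hmu0 : 0 < m u0 := (Finset.mem_filter.1 hu0).2
        have : C.pot u0 = C.POT (j+1) :=
          hmax u0 (C.mem_places.1 (Finset.mem_filter.1 hu0).1) (by omega)
        omega
    · rw [minPotD, dif_neg hM] at hlive
      exact le_trans hub hlive
  · -- other layers: both layer j and j+1 pointwise unchanged
    have hfix0 : ∀ q ∈ C.places j, m' q = m q := by
      intro q hq
      have := C.mem_places.1 hq
      exact fix q (by omega) (by omega)
    have hfix1 : ∀ q ∈ C.places (j+1), m' q = m q := by
      intro q hq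
      have := C.mem_places.1 hq
      exact fix q (by omega) (by omega)
    have hfilter : (C.places (j+1)).filter (fun q => 0 < m' q)
        = (C.places (j+1)).filter (fun q => 0 < m q) := by
      refine Finset.filter_congr fun q hq => by rw [hfix1 q hq]
    have hsum : ∑ q ∈ C.places j, m' q = ∑ q ∈ C.places j, m q :=
      Finset.sum_congr rfl hfix0
    rw [hfilter, hsum]; exact hlive

end ClosedPi3

end Aux3
section Aux4

namespace ClosedPi3

variable {P T : Type} [Fintype P] [Fintype T] {Nn : ℕ} (C : ClosedPi3 P T Nn)

/-- The main statement, at level `i`. -/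
def MainProp (i : ℕ) : Prop :=
  ∀ p : P, C.layer p = i → ∀ m : P → ℕ,
    C.pot p ≤ ∑ q ∈ C.places (i-1), m q →
    (∀ j, 1 ≤ j → j + 2 ≤ i → C.LiveSet j m) →
    ∃ m', ReachIn C.Wm C.Wp (C.transIn (fun l => l ≤ i-1)) m m' ∧
      ∀ q, C.layer q = i-1 → C.bag p q ≤ m' q

lemma stepIn_fix_high {h : ℕ} {m : P → ℕ} {t : T}
    (ht : C.transIn (fun l => l ≤ h) t) (hen : Enabled C.Wm m t)
    {u : P} (hu : h < C.layer u) : Fire C.Wm C.Wp m t u = m u := by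
  obtain ⟨s, s2, hbs, hbs2, hne, hls2⟩ := C.trans_data t
  obtain ⟨p0, hp0, hb0⟩ := ht
  have hsp : p0 = s := C.bag_inj (hb0.trans hbs.symm)
  rw [hsp] at hp0
  have z1 : C.bag s u = 0 := by
    refine C.bag_zero_of (fun he => by rw [he] at hu; omega) (by omega)
  have z2 : C.bag s2 u = 0 := by
    refine C.bag_zero_of (fun he => by rw [he, hls2] at hu; omega) (by omega)
  have hbal := fire_balance (Wp := C.Wp) hen u
  have hWm : C.Wm u t = C.bag s u := (congrFun hbs u).symm
  have hWp : C.Wp u t = C.bag s2 u := (congrFun hbs2 u).symm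
  rw [hWm, hWp] at hbal
  omega

lemma stepIn_sum_high {h l : ℕ} (hl : h ≤ l) {m : P → ℕ} {t : T}
    (ht : C.transIn (fun l' => l' ≤ h) t) (hen : Enabled C.Wm m t) :
    ∑ q ∈ C.places l, Fire C.Wm C.Wp m t q = ∑ q ∈ C.places l, m q := by
  obtain ⟨s, s2, hbs, hbs2, hne, hls2⟩ := C.trans_data t
  obtain ⟨p0, hp0, hb0⟩ := ht
  have hsp : p0 = s := C.bag_inj (hb0.trans hbs.symm)
  rw [hsp] at hp0
  have hWm : ∀ q, C.Wm q t = C.bag s q := fun q => (congrFun hbs q).symm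
  have hWp : ∀ q, C.Wp q t = C.bag s2 q := fun q => (congrFun hbs2 q).symm
  have sumbal : (∑ q ∈ C.places l, Fire C.Wm C.Wp m t q) + (∑ q ∈ C.places l, C.bag s q)
      = (∑ q ∈ C.places l, m q) + (∑ q ∈ C.places l, C.bag s2 q) := by
    rw [← Finset.sum_add_distrib, ← Finset.sum_add_distrib]
    refine Finset.sum_congr rfl fun q _ => ?_
    have := fire_balance (Wp := C.Wp) hen q
    rw [hWm q, hWp q] at this
    exact this
  by_cases hle : l = C.layer s
  · have h1 := C.sum_bag_places_self s
    have h2 := C.sum_bag_places_self s2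
    rw [← hle] at h1
    rw [hls2, ← hle] at h2
    omega
  · have h1 : ∑ q ∈ C.places l, C.bag s q = 0 :=
      C.sum_bag_places_zero hle (by omega)
    have h2 : ∑ q ∈ C.places l, C.bag s2 q = 0 :=
      C.sum_bag_places_zero (by rw [hls2]; exact hle) (by rw [hls2]; omega)
    omega

/-- Along a `ReachIn (≤ h)` sequence, places in layers above `h` are untouched. -/
lemma reachIn_fix_high {h : ℕ} {m m' : P → ℕ}
    (hr : ReachIn C.Wm C.Wp (C.transIn (fun l => l ≤ h)) m m') :
    ∀ u, h < C.layer u → m' u = m u := by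
  refine reachIn_preserve (Q := fun mm => ∀ u, h < C.layer u → mm u = m u)
    ?_ hr (fun _ _ => rfl)
  intro mm t ht hen hq u hu
  rw [C.stepIn_fix_high ht hen hu]
  exact hq u hu

/-- Along a `ReachIn (≤ h)` sequence, token counts of layers `≥ h` are preserved. -/
lemma reachIn_sum_high {h l : ℕ} (hl : h ≤ l) {m m' : P → ℕ}
    (hr : ReachIn C.Wm C.Wp (C.transIn (fun l' => l' ≤ h)) m m') :
    ∑ q ∈ C.places l, m' q = ∑ q ∈ C.places l, m q := by
  refine reachIn_preserve (Q := fun mm => ∑ q ∈ C.places l, mm q = ∑ q ∈ C.places l, m q)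
    ?_ hr rfl
  intro mm t ht hen hq
  rw [C.stepIn_sum_high hl ht hen]
  exact hq

lemma reachIn_live {j : ℕ} (hj : j ≠ Nn) {S : T → Prop} {m m' : P → ℕ}
    (hr : ReachIn C.Wm C.Wp S m m') (hlive : C.LiveSet j m) : C.LiveSet j m' :=
  reachIn_preserve (fun _ t _ hen hq => C.live_preserved hj hen hq) hr hlive

end ClosedPi3

end Aux4
section Aux5

namespace ClosedPi3

variable {P T : Type} [Fintype P] [Fintype T] {Nn : ℕ} (C : ClosedPi3 P T Nn)

open scoped Classical in
/-- The walk lemma: moving one token along a path of the bag graph within layer `k`,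
using gathering (`MainProp k`) to enable each transition. -/
lemma walk_lemma {k : ℕ} (hk1 : 1 ≤ k) (hkN : k ≤ Nn) (G : C.MainProp k)
    {b b' : P → ℕ} (hpath : Relation.ReflTransGen (BagEdge C.Wm C.Wp) b b') :
    ∀ s : P, ∀ m : P → ℕ, C.bag s = b → C.layer s = k → 1 ≤ m s →
      C.pot s ≤ ∑ q ∈ C.places (k-1), m q →
      (∀ j, 1 ≤ j → j ≤ k-1 → C.LiveSet j m) →
      ∃ s' m', C.bag s' = b' ∧
        ReachIn C.Wm C.Wp (C.transIn (fun l => l ≤ k)) m m' ∧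
        (∀ u, C.layer u = k →
          m' u + (if u = s then 1 else 0) = m u + (if u = s' then 1 else 0)) ∧
        (∑ q ∈ C.places (k-1), m' q) + C.pot s
          = (∑ q ∈ C.places (k-1), m q) + C.pot s' ∧
        (∀ j, 1 ≤ j → j ≤ k-1 → C.LiveSet j m') := by
  induction hpath using Relation.ReflTransGen.head_induction_on with
  | refl =>
    intro s m hbs hls hms hpot hlive
    exact ⟨s, m, hbs, .refl, fun u _ => rfl, rfl, hlive⟩
  | @head a c hedge htail ih =>
    intro s m hbs hls hms hpot hlive
    obtain ⟨t, hta, htc⟩ := hedge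
    obtain ⟨s2, hs2⟩ := C.bag_surj (fun q => C.Wp q t) ⟨t, Or.inr rfl⟩
    have hbsa : C.bag s = fun q => C.Wm q t := hbs.trans hta
    have hedge' : BagEdge C.Wm C.Wp (C.bag s) (C.bag s2) := ⟨t, hbsa, hs2⟩
    have hls2 : C.layer s2 = k := by rw [← (C.edge_layer s s2 hedge'), hls]
    have hne : s ≠ s2 := by
      rintro rfl
      exact C.no_useless t (hbsa.symm.trans hs2)
    -- Step 1: gather the resources of `bag s` on layer `k-1`
    obtain ⟨m1, hreach1, hg⟩ := G s hls m hpot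
      (fun j h1 h2 => hlive j h1 (by omega))
    have f1 : ∀ u, k - 1 < C.layer u → m1 u = m u := C.reachIn_fix_high hreach1
    have f2 : ∑ q ∈ C.places (k-1), m1 q = ∑ q ∈ C.places (k-1), m q :=
      C.reachIn_sum_high le_rfl hreach1
    have f3 : ∀ j, 1 ≤ j → j ≤ k-1 → C.LiveSet j m1 := fun j h1 h2 =>
      C.reachIn_live (by omega) hreach1 (hlive j h1 h2)
    -- Step 2: fire t
    have hen : Enabled C.Wm m1 t := by
      intro u
      have hWmu : C.Wm u t = C.bag s u := (congrFun hbsa u).symm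
      rw [hWmu]
      by_cases hu : u = s
      · subst hu
        rw [C.bag_self u]
        have : m1 u = m u := f1 u (by omega)
        omega
      · by_cases hlu : C.layer u = k - 1
        · exact hg u hlu
        · have : C.bag s u = 0 := C.bag_zero_of hu (by omega)
          omega
    have hstep : StepIn C.Wm C.Wp (C.transIn (fun l => l ≤ k)) m1 (Fire C.Wm C.Wp m1 t) :=
      ⟨t, ⟨s, le_of_eq hls, hbsa⟩, hen, rfl⟩
    set m2 := Fire C.Wm C.Wp m1 t with hm2
    have hWm : ∀ q, C.Wm q t = C.bag s q := fun q => (congrFun hbsa q).symm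
    have hWp : ∀ q, C.Wp q t = C.bag s2 q := fun q => (congrFun hs2 q).symm
    have bal : ∀ q, m2 q + C.bag s q = m1 q + C.bag s2 q := by
      intro q
      have := fire_balance (Wp := C.Wp) hen q
      rw [hWm q, hWp q] at this
      exact this
    have hm2s2 : 1 ≤ m2 s2 := by
      have hb0 : C.bag s s2 = 0 := C.bag_zero_of hne.symm (by omega)
      have hb1 : C.bag s2 s2 = 1 := C.bag_self s2
      have := bal s2; omega
    have hsum2 : (∑ q ∈ C.places (k-1), m2 q) + C.pot s
        = (∑ q ∈ C.places (k-1), m1 q) + C.pot s2 := by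
      have h1 : ∑ q ∈ C.places (k-1), C.bag s q = C.pot s :=
        C.sum_bag_places_pred (by omega)
      have h2 : ∑ q ∈ C.places (k-1), C.bag s2 q = C.pot s2 :=
        C.sum_bag_places_pred (by omega)
      have : (∑ q ∈ C.places (k-1), m2 q) + (∑ q ∈ C.places (k-1), C.bag s q)
          = (∑ q ∈ C.places (k-1), m1 q) + (∑ q ∈ C.places (k-1), C.bag s2 q) := by
        rw [← Finset.sum_add_distrib, ← Finset.sum_add_distrib]
        exact Finset.sum_congr rfl fun q _ => bal q
      omega
    have hpot2 : C.pot s2 ≤ ∑ q ∈ C.places (k-1), m2 q := by omega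
    have hlive2 : ∀ j, 1 ≤ j → j ≤ k-1 → C.LiveSet j m2 := fun j h1 h2 =>
      C.live_preserved (by omega) hen (f3 j h1 h2)
    have hpw2 : ∀ u, C.layer u = k →
        m2 u + (if u = s then 1 else 0) = m u + (if u = s2 then 1 else 0) := by
      intro u hu
      have hm1u : m1 u = m u := f1 u (by omega)
      have hbsu : C.bag s u = if u = s then 1 else 0 := by
        split_ifs with h
        · rw [h]; exact C.bag_self s
        · exact C.bag_zero_of h (by omega)
      have hbs2u : C.bag s2 u = if u = s2 then 1 else 0 := by
        split_ifs with h
        · rw [h]; exact C.bag_self s2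
        · exact C.bag_zero_of h (by omega)
      have := bal u
      rw [hbsu, hbs2u] at this
      omega
    -- recurse on the tail of the path
    obtain ⟨s', m', hbs', hreach', hpw', hsum', hlive'⟩ :=
      ih s2 m2 (hs2.trans htc.symm) hls2 hm2s2 hpot2 hlive2
    refine ⟨s', m', hbs', ?_, ?_, by omega, hlive'⟩
    · exact Relation.ReflTransGen.trans
        (reachIn_mono (fun t' ⟨p1, hp1, hb1⟩ => ⟨p1, by omega, hb1⟩) hreach1)
        (Relation.ReflTransGen.trans (Relation.ReflTransGen.single hstep) hreach')
    · intro u hu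
      have h1 := hpw2 u hu
      have h2 := hpw' u hu
      omega

end ClosedPi3

end Aux5
section Aux6

namespace ClosedPi3

variable {P T : Type} [Fintype P] [Fintype T] {Nn : ℕ} (C : ClosedPi3 P T Nn)

lemma mainProp_all : ∀ i, C.MainProp i := by
  intro i
  induction i using Nat.strong_induction_on with
  | _ i SIH =>
  intro p hp m0 hm0 hlive0
  have hiN : i ≤ Nn := hp ▸ C.layer_le p
  suffices H : ∀ n, ∀ m : P → ℕ,
      (∑ q ∈ C.places (i-1), (C.bag p q - m q)) = n →
      C.pot p ≤ ∑ q ∈ C.places (i-1), m q →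
      (∀ j, 1 ≤ j → j + 2 ≤ i → C.LiveSet j m) →
      ∃ m', ReachIn C.Wm C.Wp (C.transIn (fun l => l ≤ i-1)) m m' ∧
        ∀ q, C.layer q = i-1 → C.bag p q ≤ m' q by
    exact H _ m0 rfl hm0 hlive0
  intro n
  induction n using Nat.strong_induction_on with
  | _ n IH =>
  intro m hn hm hlive
  classical
  by_cases hn0 : n = 0
  · subst hn0
    refine ⟨m, .refl, fun q hq => ?_⟩
    have := Finset.sum_eq_zero_iff.1 hn q (C.mem_places.2 hq)
    omega
  · have hex0 : ∃ r ∈ C.places (i-1), m r < C.bag p r := by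
      by_contra hno; push_neg at hno
      have : ∑ q ∈ C.places (i-1), (C.bag p q - m q) = 0 :=
        Finset.sum_eq_zero fun q hq => by have := hno q hq; omega
      omega
    obtain ⟨r, hrmem, hr⟩ := hex0
    have hlr : C.layer r = i - 1 := C.mem_places.1 hrmem
    have hi2 : 2 ≤ i := by have := C.layer_pos r; omega
    set k := i - 1 with hk
    have hk1 : 1 ≤ k := by omega
    have hkN : k ≤ Nn := by omega
    have hsumbag : ∑ q ∈ C.places k, C.bag p q = C.pot p :=
      C.sum_bag_places_pred (by rw [hp]; omega)
    have hex : ∃ q ∈ C.places k, C.bag p q < m q := by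
      by_contra hno; push_neg at hno
      have hlt : ∑ q ∈ C.places k, m q < ∑ q ∈ C.places k, C.bag p q :=
        Finset.sum_lt_sum hno ⟨r, hrmem, hr⟩
      omega
    obtain ⟨q0, hq0mem, hq0⟩ := hex
    set M := (C.places k).filter (fun q => 0 < m q) with hMdef
    have hq0M : q0 ∈ M := Finset.mem_filter.2 ⟨hq0mem, by omega⟩
    obtain ⟨u0, hu0M, hu0min⟩ := Finset.exists_min_image M C.pot ⟨q0, hq0M⟩
    have hqstar : ∃ qs ∈ C.places k, C.bag p qs < m qs ∧ ∀ v ∈ M, C.pot qs ≤ C.pot v := by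
      by_cases hcase : C.bag p u0 < m u0
      · exact ⟨u0, (Finset.mem_filter.1 hu0M).1, hcase, hu0min⟩
      · have hmu0 : 0 < m u0 := (Finset.mem_filter.1 hu0M).2
        have hbu0 : 0 < C.bag p u0 := by omega
        have hlu0 : C.layer u0 = k := C.mem_places.1 (Finset.mem_filter.1 hu0M).1
        have hu0p : u0 ≠ p := by
          intro he
          rw [he, hp] at hlu0; omega
        have hmax := (C.resource p u0 hu0p hbu0).2
        refine ⟨q0, hq0mem, hq0, fun v hv => le_trans (hmax q0 ?_) (hu0min v hv)⟩
        rw [C.mem_places.1 hq0mem, hlu0]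
    obtain ⟨qs, hqsmem, hqsx, hqsmin⟩ := hqstar
    have hlqs : C.layer qs = k := C.mem_places.1 hqsmem
    have hres : C.pot qs ≤ ∑ q ∈ C.places (k-1), m q := by
      by_cases hkk : k = 1
      · rw [C.pot_layer_one (by rw [hlqs, hkk])]; omega
      · have hlv := hlive (k-1) (by omega) (by omega)
        rw [LiveSet, if_neg (by omega)] at hlv
        have hrw : k - 1 + 1 = k := by omega
        rw [hrw] at hlv
        refine le_trans (le_minPotD (fun u hu => hqsmin u hu) ?_) hlv
        calc C.pot qs ≤ C.POT (C.layer qs) := C.pot_le_POT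
          _ = C.POT k := by rw [hlqs]
    have hpath := C.layer_conn qs r (by rw [hlqs, hlr])
    obtain ⟨s', m2, hbs', hreach2, hpw, hsum, hlive2⟩ :=
      C.walk_lemma hk1 hkN (SIH k (by omega)) hpath qs m rfl hlqs (by omega) hres
        (fun j h1 h2 => hlive j h1 (by omega))
    have hs'r : s' = r := C.bag_inj hbs'
    rw [hs'r] at hpw hsum
    have hrqs : r ≠ qs := by
      intro he; rw [he] at hr; omega
    have hda : ∀ u ∈ C.places k, C.bag p u - m2 u ≤ C.bag p u - m u := by
      intro u hu
      have heq := hpw u (C.mem_places.1 hu)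
      by_cases h1 : u = qs
      · subst h1
        rw [if_pos rfl, if_neg (fun h => hrqs (by rw [h]))] at heq
        omega
      · rw [if_neg h1] at heq
        by_cases h2 : u = r
        · subst h2
          rw [if_pos rfl] at heq
          omega
        · rw [if_neg h2] at heq
          omega
    have hdr : C.bag p r - m2 r < C.bag p r - m r := by
      have heq := hpw r hlr
      rw [if_neg hrqs, if_pos rfl] at heq
      omega
    have hlt : ∑ q ∈ C.places k, (C.bag p q - m2 q) < n := by
      calc ∑ q ∈ C.places k, (C.bag p q - m2 q)
          < ∑ q ∈ C.places k, (C.bag p q - m q) := Finset.sum_lt_sum hda ⟨r, hrmem, hdr⟩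
        _ = n := hn
    have hsumk : ∑ q ∈ C.places k, m2 q = ∑ q ∈ C.places k, m q := by
      have h1 : ∑ q ∈ C.places k, (m2 q + (if q = qs then 1 else 0))
          = ∑ q ∈ C.places k, (m q + (if q = r then 1 else 0)) :=
        Finset.sum_congr rfl fun u hu => hpw u (C.mem_places.1 hu)
      rw [Finset.sum_add_distrib, Finset.sum_add_distrib] at h1
      have h2 : ∑ q ∈ C.places k, (if q = qs then (1:ℕ) else 0) = 1 := by
        rw [Finset.sum_ite_eq' (C.places k) qs (fun _ => (1:ℕ)), if_pos hqsmem]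
      have h3 : ∑ q ∈ C.places k, (if q = r then (1:ℕ) else 0) = 1 := by
        rw [Finset.sum_ite_eq' (C.places k) r (fun _ => (1:ℕ)), if_pos hrmem]
      omega
    obtain ⟨m', hreach', hdom⟩ := IH _ hlt m2 rfl (by omega)
      (fun j h1 h2 => hlive2 j h1 (by omega))
    exact ⟨m', Relation.ReflTransGen.trans hreach2 hreach', hdom⟩

end ClosedPi3

end Aux6
section Aux7

namespace OpenPi3

variable {P T : Type} [Fintype P] [Fintype T] {Nn : ℕ} (O : OpenPi3 P T Nn)

/-- Extension of a marking of the open net to the underlying closed net. -/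
def ext (m : P → ℕ) : Option P → ℕ := fun o => Option.elim o 0 m

lemma mem_places' {k : ℕ} {q : P} : q ∈ O.places k ↔ O.layer q = k := by
  simp [places]

lemma ext_sum (m : P → ℕ) (l : ℕ) :
    ∑ q ∈ O.closed.places l, ext m q = ∑ q ∈ O.places l, m q := by
  rw [ClosedPi3.places, places, Finset.sum_filter, Finset.sum_filter,
    Fintype.sum_option]
  simp [ext, layer]
  exact Fintype.sum_congr _ _ fun _ => by congr

lemma Wnone {h : ℕ} (hh : h < Nn) {t : T}
    (ht : O.closed.transIn (fun l => l ≤ h) t) :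
    O.closed.Wm none t = 0 ∧ O.closed.Wp none t = 0 := by
  obtain ⟨s, s2, hbs, hbs2, hne, hls2⟩ := O.closed.trans_data t
  obtain ⟨p0, hp0, hb0⟩ := ht
  have hsp : p0 = s := O.closed.bag_inj (hb0.trans hbs.symm)
  rw [hsp] at hp0
  have hls : O.closed.layer s ≤ h := hp0
  have hnone : O.closed.layer (none : Option P) = Nn := O.pext_layer
  constructor
  · rw [← congrFun hbs none]
    exact O.closed.bag_zero_of (fun he => by rw [← he, hnone] at hls; omega)
      (by rw [hnone]; omega)
  · rw [← congrFun hbs2 none]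
    exact O.closed.bag_zero_of (fun he => by rw [← he, hnone] at hls2; omega)
      (by rw [hnone, hls2]; omega)

lemma fire_ext {m : P → ℕ} {t : T}
    (h0m : O.closed.Wm none t = 0) (h0p : O.closed.Wp none t = 0) :
    Fire O.closed.Wm O.closed.Wp (ext m) t = ext (fun q => Fire O.Wm O.Wp m t q) := by
  funext o
  cases o with
  | none => simp [Fire, ext, h0m, h0p]
  | some q => rfl

lemma enabled_ext {m : P → ℕ} {t : T}
    (h : Enabled O.closed.Wm (ext m) t) : Enabled O.Wm m t :=
  fun q => h (some q)

lemma reach_back {h : ℕ} (hh : h < Nn) {mh mh' : Option P → ℕ}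
    (hr : ReachIn O.closed.Wm O.closed.Wp (O.closed.transIn (fun l => l ≤ h)) mh mh') :
    ∀ m : P → ℕ, mh = ext m →
    ∃ m', mh' = ext m' ∧ ReachIn O.Wm O.Wp (O.transIn (fun l => l ≤ h)) m m' := by
  induction hr with
  | refl => exact fun m hm => ⟨m, hm, .refl⟩
  | tail hab hbc ih =>
    intro m hm
    obtain ⟨m1, hb, hr1⟩ := ih m hm
    obtain ⟨t, ht, hen, hc⟩ := hbc
    obtain ⟨h0m, h0p⟩ := O.Wnone hh ht
    subst hb hc
    exact ⟨fun q => Fire O.Wm O.Wp m1 t q, O.fire_ext h0m h0p,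
      hr1.tail ⟨t, ht, O.enabled_ext hen, rfl⟩⟩

lemma live_ext {j : ℕ} (hj1 : j + 1 < Nn) {m : P → ℕ} (h : O.LiveSet j m) :
    O.closed.LiveSet j (ext m) := by
  rw [LiveSet, if_neg (by omega), if_neg (by omega)] at h
  rw [ClosedPi3.LiveSet, if_neg (by omega), ext_sum]
  have hPOT : O.closed.POT (j+1) = O.POT (j+1) := by
    rw [OpenPi3.POT, if_neg (by omega), ClosedPi3.POT]
    refine sup_eq_of_corr ?_ ?_
    · rintro (_|q) hx
      · exfalso
        have := O.closed.mem_places.1 hx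
        rw [O.pext_layer] at this; omega
      · exact ⟨q, O.mem_places'.2 (O.closed.mem_places.1 hx), rfl⟩
    · intro q hq
      exact ⟨some q, O.closed.mem_places.2 (O.mem_places'.1 hq), rfl⟩
  have hmin : minPotD ((O.closed.places (j+1)).filter (fun q => 0 < ext m q))
      O.closed.pot (O.closed.POT (j+1))
      = minPotD ((O.places (j+1)).filter (fun q => 0 < m q)) O.pot (O.POT (j+1)) := by
    rw [hPOT]
    refine minPotD_eq_of_corr ?_ ?_
    · rintro (_|q) hx
      · have := (Finset.mem_filter.1 hx).2
        simp [ext] at this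
      · obtain ⟨h1, h2⟩ := Finset.mem_filter.1 hx
        exact ⟨q, Finset.mem_filter.2 ⟨O.mem_places'.2 (O.closed.mem_places.1 h1), h2⟩, rfl⟩
    · intro q hq
      obtain ⟨h1, h2⟩ := Finset.mem_filter.1 hq
      exact ⟨some q, Finset.mem_filter.2 ⟨O.closed.mem_places.2 (O.mem_places'.1 h1), h2⟩, rfl⟩
  rw [hmin]
  exact h

end OpenPi3

end Aux7
/-- gathering the resources of a place `p ∈ P_i^*` on layer
`i − 1`, using only transitions of layers `≤ i − 1`. -/
theorem stmt_12 :
    (∀ (P T : Type) [Fintype P] [Fintype T] (Nn : ℕ) (C : ClosedPi3 P T Nn),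
      ∀ i ∈ Finset.Icc 1 Nn, ∀ p : P, C.layer p = i →
        ∀ m : P → ℕ, C.pot p ≤ ∑ q ∈ C.places (i - 1), m q →
          (∀ j ∈ Finset.Icc 1 (i - 1), C.LiveSet j m) →
          ∃ m', ReachIn C.Wm C.Wp (C.transIn (· ≤ i - 1)) m m' ∧
            ∀ q, C.layer q = i - 1 → C.bag p q ≤ m' q) ∧
    (∀ (P T : Type) [Fintype P] [Fintype T] (Nn : ℕ) (O : OpenPi3 P T Nn),
      ∀ i ∈ Finset.Icc 1 Nn, ∀ p' : Option P, O.closed.layer p' = i →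
        ∀ m : P → ℕ, O.closed.pot p' ≤ ∑ q ∈ O.places (i - 1), m q →
          (∀ j ∈ Finset.Icc 1 (i - 1), O.LiveSet j m) →
          ∃ m', ReachIn O.Wm O.Wp (O.transIn (· ≤ i - 1)) m m' ∧
            ∀ q, O.layer q = i - 1 → O.closed.bag p' (some q) ≤ m' q) := by
  constructor
  · intro P T _ _ Nn C i hi p hp m hm hlive
    exact C.mainProp_all i p hp m hm
      (fun j h1 h2 => hlive j (Finset.mem_Icc.2 ⟨h1, by omega⟩))
  · intro P T _ _ Nn O i hi p' hp' m hm hlive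
    have hiN : i ≤ Nn := (Finset.mem_Icc.1 hi).2
    have hi1 : 1 ≤ i := (Finset.mem_Icc.1 hi).1
    obtain ⟨mh', hreach, hdom⟩ := O.closed.mainProp_all i p' hp' (OpenPi3.ext m)
      (by rw [OpenPi3.ext_sum]; exact hm)
      (fun j h1 h2 => O.live_ext (by omega)
        (hlive j (Finset.mem_Icc.2 ⟨h1, by omega⟩)))
    have hh : i - 1 < Nn := by omega
    obtain ⟨m', hext', hreach'⟩ := O.reach_back hh hreach m rfl
    refine ⟨m', hreach', fun q hq => ?_⟩
    have := hdom (some q) hq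
    rw [hext'] at this
    exact this
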